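/- Let A be a separable C*-algebra, H a separable complex Hilbert space, and π : A → B(H) a *-representation. Let F ∈ B(H) satisfy F = F*, F² ≤ 1, and suppose [F,π(a)] and π(a)(1 − F²) are compact for every a ∈ A. Let J := {T ∈ B(H) : Tπ(a) and π(a)T are compact for all a ∈ A}, and let p be the orthogonal projection onto the closed linear span of {π(a)h : a ∈ A, h ∈ H}. Then there exists a positive operator h ∈ J with dense range such that [pFp, h] = 0. -/

import Mathlib

set_option synthInstance.maxHeartbeats 1000000
set_option maxHeartbeats 1000000

open Filter Topology

open scoped InnerProductSpace ComplexConjugate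

section Aux

variable {H : Type*} [NormedAddCommGroup H] [InnerProductSpace ℂ H]

/-- rank-one operators are compact -/
lemma aux_rankOne_compact (f : H →L[ℂ] ℂ) (v : H) :
    IsCompactOperator ⇑(f.smulRight v) := by
  refine ⟨(fun a : ℂ => a • v) '' Metric.closedBall 0 ‖f‖, ?_, ?_⟩
  · exact (isCompact_closedBall (0:ℂ) ‖f‖).image (continuous_id.smul continuous_const)
  · refine Filter.mem_of_superset (Metric.closedBall_mem_nhds (0:H) one_pos) ?_
    intro x hx
    refine ⟨f x, ?_, by simp⟩
    simp only [Metric.mem_closedBall, dist_zero_right] at hx ⊢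
    calc ‖f x‖ ≤ ‖f‖ * ‖x‖ := f.le_opNorm x
    _ ≤ ‖f‖ * 1 := by gcongr
    _ = ‖f‖ := mul_one _

lemma aux_finsum_compact (s : Finset ℕ) (R : ℕ → H →L[ℂ] H)
    (hR : ∀ n, IsCompactOperator ⇑(R n)) :
    IsCompactOperator ⇑(∑ n ∈ s, R n) := by
  classical
  induction s using Finset.cons_induction with
  | empty => simpa using (isCompactOperator_zero : IsCompactOperator (0 : H → H))
  | cons a s ha ih =>
    rw [Finset.sum_cons, ContinuousLinearMap.coe_add']
    exact (hR a).add ih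

variable [CompleteSpace H] [TopologicalSpace.SeparableSpace H]

/-- Existence of a compact, positive, "strictly positive" operator on a separable
Hilbert space. -/
lemma aux_exists_good_C :
    ∃ C : H →L[ℂ] H, IsCompactOperator ⇑C ∧ C.IsPositive ∧
      ∀ x : H, RCLike.re (⟪C x, x⟫_ℂ) = 0 → x = 0 := by
  have : Nonempty H := ⟨0⟩
  obtain ⟨u, hu⟩ := TopologicalSpace.exists_dense_seq H
  set c : ℕ → ℝ := fun n => (2⁻¹ : ℝ)^n * (1 + ‖u n‖^2)⁻¹ with hc
  have hden : ∀ n, (0:ℝ) < 1 + ‖u n‖^2 := fun n => by positivity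
  have hcpos : ∀ n, 0 < c n := fun n =>
    mul_pos (pow_pos (by norm_num) n) (inv_pos.mpr (hden n))
  have hcb : ∀ n, c n * (‖u n‖ * ‖u n‖) ≤ (2⁻¹:ℝ)^n := by
    intro n
    have h1 : (1 + ‖u n‖^2)⁻¹ * (‖u n‖ * ‖u n‖) ≤ 1 := by
      rw [inv_mul_le_iff₀ (hden n)]
      nlinarith [sq_nonneg ‖u n‖]
    calc c n * (‖u n‖ * ‖u n‖) = (2⁻¹:ℝ)^n * ((1 + ‖u n‖^2)⁻¹ * (‖u n‖ * ‖u n‖)) := by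
          rw [hc]; ring
    _ ≤ (2⁻¹:ℝ)^n * 1 := mul_le_mul_of_nonneg_left h1 (by positivity)
    _ = (2⁻¹:ℝ)^n := mul_one _
  set R : ℕ → H →L[ℂ] H := fun n => c n • (innerSL ℂ (u n)).smulRight (u n) with hRdef
  have hgeo : Summable (fun n => (2⁻¹:ℝ)^n) :=
    summable_geometric_of_lt_one (by norm_num) (by norm_num)
  have hRnorm : ∀ n, ‖R n‖ ≤ (2⁻¹:ℝ)^n := by
    intro n
    rw [hRdef]
    simp only []
    rw [norm_smul, Real.norm_eq_abs, abs_of_pos (hcpos n),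
      ContinuousLinearMap.norm_smulRight_apply, innerSL_apply_norm]
    exact hcb n
  have hSum : Summable R := Summable.of_norm_bounded hgeo hRnorm
  set C : H →L[ℂ] H := ∑' n, R n with hCdef
  have happly : ∀ x : H, C x = ∑' n, R n x := by
    intro x
    rw [hCdef]
    exact (ContinuousLinearMap.apply ℂ H x).map_tsum hSum
  have hsumx : ∀ x : H, Summable (fun n => R n x) := fun x =>
    hSum.map (ContinuousLinearMap.apply ℂ H x).toLinearMap.toAddMonoidHom
      (ContinuousLinearMap.apply ℂ H x).continuous
  have hterm : ∀ (x : H) (n : ℕ), ⟪x, R n x⟫_ℂ = ((c n * ‖⟪u n, x⟫_ℂ‖^2 : ℝ) : ℂ) := by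
    intro x n
    rw [hRdef]
    simp only [ContinuousLinearMap.smul_apply, ContinuousLinearMap.smulRight_apply,
      innerSL_apply_apply]
    rw [RCLike.real_smul_eq_coe_smul (K := ℂ) (c n), inner_smul_right, inner_smul_right,
      ← inner_conj_symm x (u n), Complex.mul_conj,
      show Complex.normSq (⟪u n, x⟫_ℂ) = ‖⟪u n, x⟫_ℂ‖^2 by
        rw [Complex.normSq_eq_norm_sq]]
    exact (Complex.ofReal_mul _ _).symm
  have hts : ∀ x : H, Summable (fun n => c n * ‖⟪u n, x⟫_ℂ‖^2) := by
    intro x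
    refine Summable.of_nonneg_of_le (fun n => by positivity) (fun n => ?_)
      (hgeo.mul_right (‖x‖^2))
    have h1 : ‖⟪u n, x⟫_ℂ‖ ≤ ‖u n‖ * ‖x‖ := norm_inner_le_norm _ _
    have h2 : ‖⟪u n, x⟫_ℂ‖^2 ≤ (‖u n‖ * ‖u n‖) * ‖x‖^2 := by
      nlinarith [norm_nonneg (⟪u n, x⟫_ℂ), norm_nonneg (u n), norm_nonneg x]
    calc c n * ‖⟪u n, x⟫_ℂ‖^2 ≤ c n * ((‖u n‖ * ‖u n‖) * ‖x‖^2) :=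
          mul_le_mul_of_nonneg_left h2 (hcpos n).le
    _ = (c n * (‖u n‖ * ‖u n‖)) * ‖x‖^2 := by ring
    _ ≤ (2⁻¹:ℝ)^n * ‖x‖^2 := mul_le_mul_of_nonneg_right (hcb n) (by positivity)
  have hinner : ∀ x : H, ⟪x, C x⟫_ℂ = ((∑' n, c n * ‖⟪u n, x⟫_ℂ‖^2 : ℝ) : ℂ) := by
    intro x
    have h1 := (innerSL ℂ x).map_tsum (hsumx x)
    simp only [innerSL_apply_apply] at h1
    rw [happly, h1]
    rw [tsum_congr (fun n => hterm x n), ← Complex.ofReal_tsum]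
  have hreal : ∀ x : H, ⟪C x, x⟫_ℂ = ((∑' n, c n * ‖⟪u n, x⟫_ℂ‖^2 : ℝ) : ℂ) := by
    intro x
    rw [← inner_conj_symm (C x) x, hinner, Complex.conj_ofReal]
  refine ⟨C, ?_, ?_, ?_⟩
  · -- compactness
    have htend : Filter.Tendsto (fun N => ∑ n ∈ Finset.range N, R n) atTop (𝓝 C) :=
      hSum.hasSum.tendsto_sum_nat
    refine isCompactOperator_of_tendsto htend (Filter.Eventually.of_forall fun N => ?_)
    refine aux_finsum_compact _ _ (fun n => ?_)
    rw [hRdef]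
    simp only [ContinuousLinearMap.coe_smul]
    exact (aux_rankOne_compact (innerSL ℂ (u n)) (u n)).smul (c n)
  · -- positivity
    rw [ContinuousLinearMap.isPositive_iff_complex]
    intro x
    rw [hreal]
    constructor
    · norm_cast
    · have h0 : (0:ℝ) ≤ ∑' n, c n * ‖⟪u n, x⟫_ℂ‖^2 := tsum_nonneg (fun n => by positivity)
      simpa using h0
  · -- strict positivity
    intro x hx
    rw [hreal] at hx
    norm_cast at hx
    have hzero : ∀ n, ⟪u n, x⟫_ℂ = 0 := by
      intro n
      have h1 : c n * ‖⟪u n, x⟫_ℂ‖^2 ≤ 0 := by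
        rw [← hx]
        exact Summable.le_tsum (hts x) n (fun j _ => by positivity)
      have h2 : (0:ℝ) ≤ c n * ‖⟪u n, x⟫_ℂ‖^2 := by positivity
      have h3 : c n * ‖⟪u n, x⟫_ℂ‖^2 = 0 := le_antisymm h1 h2
      have h4 : ‖⟪u n, x⟫_ℂ‖^2 = 0 := by
        rcases mul_eq_zero.mp h3 with h | h
        · exact absurd h (hcpos n).ne'
        · exact h
      have h5 := pow_eq_zero_iff (n := 2) (by norm_num) |>.mp h4
      exact norm_eq_zero.mp h5
    have hcl : IsClosed {y : H | ⟪y, x⟫_ℂ = 0} :=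
      isClosed_eq (Continuous.inner continuous_id continuous_const) continuous_const
    have hsub : Set.range u ⊆ {y : H | ⟪y, x⟫_ℂ = 0} := by
      rintro _ ⟨n, rfl⟩; exact hzero n
    have huniv : (Set.univ : Set H) ⊆ {y : H | ⟪y, x⟫_ℂ = 0} := by
      rw [← hu.closure_eq]
      exact closure_minimal hsub hcl
    exact inner_self_eq_zero.mp (huniv (Set.mem_univ x))

end Aux

/-- Let `A` be a separable C*-algebra, `H` a separable complex Hilbert
space, and `π : A → B(H)` a *-representation.  Let `F ∈ B(H)` satisfy `F = F*`, `F² ≤ 1`,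
and suppose `[F,π(a)]` and `π(a)(1 − F²)` are compact for every `a ∈ A`.  Let
`J := {T : Tπ(a), π(a)T compact for all a}` and `p` the orthogonal projection onto the
closed linear span of `{π(a)h}`.  Then there exists a positive operator `h ∈ J` with
dense range such that `[pFp, h] = 0`. -/
theorem statement16
    {A : Type*} [NonUnitalCStarAlgebra A] [TopologicalSpace.SeparableSpace A]
    {H : Type*} [NormedAddCommGroup H] [InnerProductSpace ℂ H] [CompleteSpace H]
    [TopologicalSpace.SeparableSpace H]
    -- the *-representation π
    (π : A →⋆ₙₐ[ℂ] (H →L[ℂ] H))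
    -- F self-adjoint with F² ≤ 1
    (F : H →L[ℂ] H) (hFsa : IsSelfAdjoint F)
    (hFsq : (1 - F * F).IsPositive)
    -- compactness assumptions
    (hcomm : ∀ a : A, IsCompactOperator ⇑(F * π a - π a * F))
    (hcpt : ∀ a : A, IsCompactOperator ⇑(π a * (1 - F * F))) :
    -- p : the orthogonal projection onto the closed linear span of {π(a)h}
    ∀ p : H →L[ℂ] H,
      IsSelfAdjoint p → p * p = p →
      Set.range p = closure
        ((Submodule.span ℂ {x : H | ∃ (a : A) (h : H), π a h = x} : Submodule ℂ H) : Set H) →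
      -- there is a positive h ∈ J with dense range commuting with pFp
      ∃ h : H →L[ℂ] H,
        h.IsPositive ∧
        (∀ a : A, IsCompactOperator ⇑(h * π a) ∧ IsCompactOperator ⇑(π a * h)) ∧
        DenseRange ⇑h ∧
        (p * F * p) * h = h * (p * F * p) := by
  intro p hpsa hpp hrange
  obtain ⟨C, hCcpt, hCpos, hCstrict⟩ := aux_exists_good_C (H := H)
  -- symmetric-operator fact
  have hsymm : ∀ (G : H →L[ℂ] H), IsSelfAdjoint G → ∀ x y : H, ⟪G x, y⟫_ℂ = ⟪x, G y⟫_ℂ :=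
    fun G hG x y => (ContinuousLinearMap.isSelfAdjoint_iff_isSymmetric.mp hG) x y
  -- p fixes the range of each π a
  have hpπ : ∀ a : A, p * π a = π a := by
    intro a
    ext x
    have hmem : π a x ∈ Set.range p := by
      rw [hrange]
      exact subset_closure (Submodule.subset_span ⟨a, x, rfl⟩)
    obtain ⟨y, hy⟩ := hmem
    have h1 : p (π a x) = π a x := by
      rw [← hy, ← ContinuousLinearMap.mul_apply, hpp]
    simpa [ContinuousLinearMap.mul_apply] using h1
  have hπp : ∀ a : A, π a * p = π a := by
    intro a
    have h1 : p * π (star a) = π (star a) := hpπ (star a)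
    have h2 := congrArg star h1
    rw [star_mul, hpsa.star_eq, map_star, star_star] at h2
    exact h2
  -- projection inner product fact
  have hproj_inner : ∀ (q : H →L[ℂ] H), IsSelfAdjoint q → q * q = q →
      ∀ x : H, ⟪q x, x⟫_ℂ = ⟪q x, q x⟫_ℂ := by
    intro q hq hqq x
    have h1 : q (q x) = q x := by
      rw [← ContinuousLinearMap.mul_apply, hqq]
    calc ⟪q x, x⟫_ℂ = ⟪q (q x), x⟫_ℂ := by rw [h1]
    _ = ⟪q x, q x⟫_ℂ := hsymm q hq (q x) x
  -- norm bounds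
  have hFnorm : ∀ y : H, ‖F y‖^2 ≤ ‖y‖^2 := by
    intro y
    have h1 := hFsq.2 y
    rw [ContinuousLinearMap.reApplyInnerSelf] at h1
    have h2 : ⟪(1 - F * F) y, y⟫_ℂ = ⟪y, y⟫_ℂ - ⟪F (F y), y⟫_ℂ := by
      simp [ContinuousLinearMap.sub_apply, ContinuousLinearMap.mul_apply, inner_sub_left]
    rw [h2, map_sub, hsymm F hFsa (F y) y] at h1
    rw [inner_self_eq_norm_sq, inner_self_eq_norm_sq] at h1
    linarith
  have hpnorm : ∀ y : H, ‖p y‖^2 ≤ ‖y‖^2 := by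
    intro y
    have h1 : ⟪p y, p y⟫_ℂ = ⟪y, p y⟫_ℂ := by
      calc ⟪p y, p y⟫_ℂ = ⟪y, p (p y)⟫_ℂ := hsymm p hpsa y (p y)
      _ = ⟪y, p y⟫_ℂ := by rw [← ContinuousLinearMap.mul_apply, hpp]
    have h3 : ‖p y‖^2 = RCLike.re ⟪y, p y⟫_ℂ := by
      rw [← h1, inner_self_eq_norm_sq]
    have h4 : RCLike.re ⟪y, p y⟫_ℂ ≤ ‖y‖ * ‖p y‖ :=
      (RCLike.re_le_norm _).trans (norm_inner_le_norm _ _)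
    nlinarith [norm_nonneg (p y), norm_nonneg y]
  -- T = pFp
  set T : H →L[ℂ] H := p * F * p with hT
  have hTsa : IsSelfAdjoint T := by
    rw [hT, IsSelfAdjoint, star_mul, star_mul, hpsa.star_eq, hFsa.star_eq, mul_assoc]
  have hTp : T * p = T := by
    rw [hT, mul_assoc (p * F) p p, hpp]
  have hpT : p * T = T := by
    rw [hT, ← mul_assoc, ← mul_assoc, hpp]
  have hTapp : ∀ x : H, T x = p (F (p x)) := by
    intro x
    rw [hT]
    simp [ContinuousLinearMap.mul_apply]
  -- eigenspaces
  set U₁ : Submodule ℂ H := LinearMap.ker ((T - 1 : H →L[ℂ] H) : H →ₗ[ℂ] H) with hU₁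
  set U₂ : Submodule ℂ H := LinearMap.ker ((T + 1 : H →L[ℂ] H) : H →ₗ[ℂ] H) with hU₂
  haveI : CompleteSpace U₁ := (ContinuousLinearMap.isClosed_ker (T - 1)).completeSpace_coe
  haveI : CompleteSpace U₂ := (ContinuousLinearMap.isClosed_ker (T + 1)).completeSpace_coe
  set P₁ : H →L[ℂ] H := U₁.subtypeL.comp (Submodule.orthogonalProjectionOnto U₁) with hP₁
  set P₂ : H →L[ℂ] H := U₂.subtypeL.comp (Submodule.orthogonalProjectionOnto U₂) with hP₂
  have hP₁sa : IsSelfAdjoint P₁ := isSelfAdjoint_starProjection U₁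
  have hP₂sa : IsSelfAdjoint P₂ := isSelfAdjoint_starProjection U₂
  have hP₁mem : ∀ x : H, P₁ x ∈ U₁ := fun x => by
    rw [hP₁]; exact (Submodule.orthogonalProjectionOnto U₁ x).2
  have hP₂mem : ∀ x : H, P₂ x ∈ U₂ := fun x => by
    rw [hP₂]; exact (Submodule.orthogonalProjectionOnto U₂ x).2
  have hTP₁ : T * P₁ = P₁ := by
    ext x
    have h1 := hP₁mem x
    rw [hU₁, LinearMap.mem_ker] at h1
    have h2 : T (P₁ x) - P₁ x = 0 := by
      simpa [ContinuousLinearMap.sub_apply, ContinuousLinearMap.one_apply] using h1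
    rw [ContinuousLinearMap.mul_apply]
    rw [sub_eq_zero] at h2
    exact h2
  have hTP₂ : T * P₂ = -P₂ := by
    ext x
    have h1 := hP₂mem x
    rw [hU₂, LinearMap.mem_ker] at h1
    have h2 : T (P₂ x) + P₂ x = 0 := by
      simpa [ContinuousLinearMap.add_apply, ContinuousLinearMap.one_apply] using h1
    rw [ContinuousLinearMap.mul_apply, ContinuousLinearMap.neg_apply]
    linear_combination (norm := module) h2
  have hP₁T : P₁ * T = P₁ := by
    have h1 := congrArg star hTP₁
    rwa [star_mul, hTsa.star_eq, hP₁sa.star_eq] at h1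
  have hP₂T : P₂ * T = -P₂ := by
    have h1 := congrArg star hTP₂
    rwa [star_mul, hTsa.star_eq, hP₂sa.star_eq, star_neg, hP₂sa.star_eq] at h1
  -- the pieces
  set S₁ : H →L[ℂ] H := P₁ * C * P₁ with hS₁
  set S₂ : H →L[ℂ] H := P₂ * C * P₂ with hS₂
  have hS₁pos : S₁.IsPositive := by
    have h1 := hCpos.conj_starProjection U₁
    have h2 : S₁ = U₁.subtypeL ∘L Submodule.orthogonalProjectionOnto U₁ ∘L C ∘L U₁.subtypeL ∘L
        Submodule.orthogonalProjectionOnto U₁ := by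
      rw [hS₁, hP₁]
      ext x
      simp [ContinuousLinearMap.mul_apply, ContinuousLinearMap.comp_apply]
    rw [h2]; exact h1
  have hS₂pos : S₂.IsPositive := by
    have h1 := hCpos.conj_starProjection U₂
    have h2 : S₂ = U₂.subtypeL ∘L Submodule.orthogonalProjectionOnto U₂ ∘L C ∘L U₂.subtypeL ∘L
        Submodule.orthogonalProjectionOnto U₂ := by
      rw [hS₂, hP₂]
      ext x
      simp [ContinuousLinearMap.mul_apply, ContinuousLinearMap.comp_apply]
    rw [h2]; exact h1
  -- q := 1 - p
  have hqsa : IsSelfAdjoint (1 - p : H →L[ℂ] H) := by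
    rw [IsSelfAdjoint, star_sub, star_one, hpsa.star_eq]
  have hqq : (1 - p) * (1 - p) = 1 - p := by
    rw [mul_sub, sub_mul, sub_mul, one_mul, mul_one, hpp]
    abel
  have hqpos : (1 - p : H →L[ℂ] H).IsPositive := by
    refine ⟨ContinuousLinearMap.isSelfAdjoint_iff_isSymmetric.mp hqsa, fun x => ?_⟩
    rw [ContinuousLinearMap.reApplyInnerSelf, hproj_inner _ hqsa hqq x,
      inner_self_eq_norm_sq]
    positivity
  have hTTsa : IsSelfAdjoint (T * T) := by
    rw [IsSelfAdjoint, star_mul, hTsa.star_eq]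
  have hgsa : IsSelfAdjoint (p - T * T) := hpsa.sub hTTsa
  have hTnorm : ∀ x : H, ‖T x‖^2 ≤ ‖p x‖^2 := by
    intro x
    rw [hTapp]
    calc ‖p (F (p x))‖^2 ≤ ‖F (p x)‖^2 := hpnorm _
    _ ≤ ‖p x‖^2 := hFnorm _
  have hgre : ∀ x : H, (p - T * T).reApplyInnerSelf x = ‖p x‖^2 - ‖T x‖^2 := by
    intro x
    rw [ContinuousLinearMap.reApplyInnerSelf]
    have h1 : ⟪(p - T * T) x, x⟫_ℂ = ⟪p x, x⟫_ℂ - ⟪T (T x), x⟫_ℂ := by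
      simp [ContinuousLinearMap.sub_apply, ContinuousLinearMap.mul_apply, inner_sub_left]
    rw [h1, map_sub, hproj_inner p hpsa hpp x, hsymm T hTsa (T x) x,
      inner_self_eq_norm_sq, inner_self_eq_norm_sq]
  have hgpos : (p - T * T).IsPositive := by
    refine ⟨ContinuousLinearMap.isSelfAdjoint_iff_isSymmetric.mp hgsa, fun x => ?_⟩
    rw [hgre]
    have := hTnorm x
    linarith
  -- the operator h
  set hop : H →L[ℂ] H := (1 - p) + ((p - T * T) + (S₁ + S₂)) with hhop
  have hpos : hop.IsPositive := hqpos.add (hgpos.add (hS₁pos.add hS₂pos))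
  -- compactness of h π a and π a h
  have hJ : ∀ a : A, IsCompactOperator ⇑(hop * π a) ∧ IsCompactOperator ⇑(π a * hop) := by
    intro a
    have hpp2 : ∀ X : H →L[ℂ] H, p * (p * X) = p * X := fun X => by
      rw [← mul_assoc, hpp]
    have hpπ2 : ∀ X : H →L[ℂ] H, p * (π a * X) = π a * X := fun X => by
      rw [← mul_assoc, hpπ a]
    have hπp2 : ∀ X : H →L[ℂ] H, π a * (p * X) = π a * X := fun X => by
      rw [← mul_assoc, hπp a]
    set c1 : H →L[ℂ] H := F * π a - π a * F with hc1
    have hc1cpt : IsCompactOperator ⇑c1 := hcomm a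
    have key1 : (p - T * T) * π a = π a * (1 - F * F) - p * c1 * F - T * c1 := by
      rw [hT, hc1]
      simp only [mul_sub, sub_mul, mul_one, one_mul, mul_assoc, hpp2, hpπ2, hπp2,
        hpπ a, hπp a, hpp]
      abel
    have key2 : π a * (p - T * T) =
        π a * (1 - F * F) - F * c1 - c1 * F + F * c1 * p + c1 * T := by
      rw [hT, hc1]
      simp only [mul_sub, sub_mul, mul_one, one_mul, mul_assoc, hpp2, hpπ2, hπp2,
        hpπ a, hπp a, hpp]
      abel
    have h1 : IsCompactOperator ⇑(π a * (1 - F * F)) := hcpt a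
    have h2 : IsCompactOperator ⇑(p * c1 * F) := by
      have h := (hc1cpt.comp_clm F).continuous_comp p.continuous
      have heq : ⇑(p * c1 * F) = ⇑p ∘ (⇑c1 ∘ ⇑F) := rfl
      rw [heq]; exact h
    have h3 : IsCompactOperator ⇑(T * c1) := by
      have h := hc1cpt.continuous_comp T.continuous
      have heq : ⇑(T * c1) = ⇑T ∘ ⇑c1 := rfl
      rw [heq]; exact h
    have h4 : IsCompactOperator ⇑(F * c1) := by
      have h := hc1cpt.continuous_comp F.continuous
      have heq : ⇑(F * c1) = ⇑F ∘ ⇑c1 := rfl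
      rw [heq]; exact h
    have h5 : IsCompactOperator ⇑(c1 * F) := by
      have h := hc1cpt.comp_clm F
      have heq : ⇑(c1 * F) = ⇑c1 ∘ ⇑F := rfl
      rw [heq]; exact h
    have h6 : IsCompactOperator ⇑(F * c1 * p) := by
      have h := (hc1cpt.comp_clm p).continuous_comp F.continuous
      have heq : ⇑(F * c1 * p) = ⇑F ∘ (⇑c1 ∘ ⇑p) := rfl
      rw [heq]; exact h
    have h7 : IsCompactOperator ⇑(c1 * T) := by
      have h := hc1cpt.comp_clm T
      have heq : ⇑(c1 * T) = ⇑c1 ∘ ⇑T := rfl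
      rw [heq]; exact h
    have hkey1 : IsCompactOperator ⇑((p - T * T) * π a) := by
      rw [key1]
      have h := (h1.sub h2).sub h3
      have heq : ⇑(π a * (1 - F * F) - p * c1 * F - T * c1) =
          (⇑(π a * (1 - F * F)) - ⇑(p * c1 * F)) - ⇑(T * c1) := rfl
      rw [heq]; exact h
    have hkey2 : IsCompactOperator ⇑(π a * (p - T * T)) := by
      rw [key2]
      have h := (((h1.sub h4).sub h5).add h6).add h7
      have heq : ⇑(π a * (1 - F * F) - F * c1 - c1 * F + F * c1 * p + c1 * T) =
          ((⇑(π a * (1 - F * F)) - ⇑(F * c1)) - ⇑(c1 * F)) + ⇑(F * c1 * p) + ⇑(c1 * T) := rfl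
      rw [heq]; exact h
    have hqπ : IsCompactOperator ⇑((1 - p) * π a) := by
      have h0 : (1 - p) * π a = 0 := by rw [sub_mul, one_mul, hpπ a, sub_self]
      rw [h0]
      simpa using (isCompactOperator_zero : IsCompactOperator (0 : H → H))
    have hπq : IsCompactOperator ⇑(π a * (1 - p)) := by
      have h0 : π a * (1 - p) = 0 := by rw [mul_sub, mul_one, hπp a, sub_self]
      rw [h0]
      simpa using (isCompactOperator_zero : IsCompactOperator (0 : H → H))
    have hS₁π : IsCompactOperator ⇑(S₁ * π a) := by
      have h := (hCcpt.comp_clm (P₁ * π a)).continuous_comp P₁.continuous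
      have heq : ⇑(S₁ * π a) = ⇑P₁ ∘ (⇑C ∘ ⇑(P₁ * π a)) := by
        rw [hS₁]
        simp [ContinuousLinearMap.coe_mul, Function.comp_assoc]
      rw [heq]; exact h
    have hS₂π : IsCompactOperator ⇑(S₂ * π a) := by
      have h := (hCcpt.comp_clm (P₂ * π a)).continuous_comp P₂.continuous
      have heq : ⇑(S₂ * π a) = ⇑P₂ ∘ (⇑C ∘ ⇑(P₂ * π a)) := by
        rw [hS₂]
        simp [ContinuousLinearMap.coe_mul, Function.comp_assoc]
      rw [heq]; exact h
    have hπS₁ : IsCompactOperator ⇑(π a * S₁) := by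
      have h := (hCcpt.comp_clm P₁).continuous_comp (π a * P₁).continuous
      have heq : ⇑(π a * S₁) = ⇑(π a * P₁) ∘ (⇑C ∘ ⇑P₁) := by
        rw [hS₁]
        simp [ContinuousLinearMap.coe_mul, Function.comp_assoc]
      rw [heq]; exact h
    have hπS₂ : IsCompactOperator ⇑(π a * S₂) := by
      have h := (hCcpt.comp_clm P₂).continuous_comp (π a * P₂).continuous
      have heq : ⇑(π a * S₂) = ⇑(π a * P₂) ∘ (⇑C ∘ ⇑P₂) := by
        rw [hS₂]
        simp [ContinuousLinearMap.coe_mul, Function.comp_assoc]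
      rw [heq]; exact h
    constructor
    · have hdist : hop * π a = ((1 - p) * π a + ((p - T * T) * π a + (S₁ * π a + S₂ * π a))) := by
        rw [hhop]
        simp [add_mul]
      rw [hdist]
      have h := hqπ.add (hkey1.add (hS₁π.add hS₂π))
      have heq : ⇑((1 - p) * π a + ((p - T * T) * π a + (S₁ * π a + S₂ * π a))) =
          ⇑((1 - p) * π a) + (⇑((p - T * T) * π a) + (⇑(S₁ * π a) + ⇑(S₂ * π a))) := rfl
      rw [heq]; exact h
    · have hdist : π a * hop = (π a * (1 - p) + (π a * (p - T * T) + (π a * S₁ + π a * S₂))) := by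
        rw [hhop]
        simp [mul_add]
      rw [hdist]
      have h := hπq.add (hkey2.add (hπS₁.add hπS₂))
      have heq : ⇑(π a * (1 - p) + (π a * (p - T * T) + (π a * S₁ + π a * S₂))) =
          ⇑(π a * (1 - p)) + (⇑(π a * (p - T * T)) + (⇑(π a * S₁) + ⇑(π a * S₂))) := rfl
      rw [heq]; exact h
  -- injectivity
  have hinj : ∀ x : H, hop x = 0 → x = 0 := by
    intro x hx
    have e1 := hqpos.2 x
    have e2 := hgpos.2 x
    have e3 := hS₁pos.2 x
    have e4 := hS₂pos.2 x
    have esum : (1 - p).reApplyInnerSelf x + ((p - T * T).reApplyInnerSelf x +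
        (S₁.reApplyInnerSelf x + S₂.reApplyInnerSelf x)) = 0 := by
      have h0 : hop.reApplyInnerSelf x = 0 := by
        rw [ContinuousLinearMap.reApplyInnerSelf, hx]
        simp
      rw [← h0, hhop]
      simp only [ContinuousLinearMap.reApplyInnerSelf, ContinuousLinearMap.add_apply,
        inner_add_left, map_add]
    have z1 : (1 - p).reApplyInnerSelf x = 0 := by linarith
    have z2 : (p - T * T).reApplyInnerSelf x = 0 := by linarith
    have z3 : S₁.reApplyInnerSelf x = 0 := by linarith
    have z4 : S₂.reApplyInnerSelf x = 0 := by linarith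
    -- p x = x
    have hpx : p x = x := by
      have h1 : (1 - p).reApplyInnerSelf x = ‖(1 - p) x‖^2 := by
        rw [ContinuousLinearMap.reApplyInnerSelf, hproj_inner _ hqsa hqq x,
          inner_self_eq_norm_sq]
      rw [h1] at z1
      have h2 : (1 - p) x = 0 := by
        have := pow_eq_zero_iff (n := 2) (by norm_num) |>.mp z1
        exact norm_eq_zero.mp this
      have h3 : x - p x = 0 := by
        simpa [ContinuousLinearMap.sub_apply, ContinuousLinearMap.one_apply] using h2
      rw [sub_eq_zero] at h3
      exact h3.symm
    -- ‖T x‖² = ‖x‖²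
    have hTx2 : ‖T x‖^2 = ‖x‖^2 := by
      rw [hgre, hpx] at z2
      linarith
    -- P₁ x = 0 and P₂ x = 0
    have hP₁x : P₁ x = 0 := by
      have h1 : S₁.reApplyInnerSelf x = RCLike.re ⟪C (P₁ x), P₁ x⟫_ℂ := by
        rw [ContinuousLinearMap.reApplyInnerSelf]
        have h2 : S₁ x = P₁ (C (P₁ x)) := by
          rw [hS₁]; simp [ContinuousLinearMap.mul_apply]
        rw [h2, hsymm P₁ hP₁sa (C (P₁ x)) x]
      rw [h1] at z3
      exact hCstrict (P₁ x) z3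
    have hP₂x : P₂ x = 0 := by
      have h1 : S₂.reApplyInnerSelf x = RCLike.re ⟪C (P₂ x), P₂ x⟫_ℂ := by
        rw [ContinuousLinearMap.reApplyInnerSelf]
        have h2 : S₂ x = P₂ (C (P₂ x)) := by
          rw [hS₂]; simp [ContinuousLinearMap.mul_apply]
        rw [h2, hsymm P₂ hP₂sa (C (P₂ x)) x]
      rw [h1] at z4
      exact hCstrict (P₂ x) z4
    -- chain of equalities
    have hTx_eq : T x = p (F x) := by rw [hTapp, hpx]
    have hpFx2 : ‖p (F x)‖^2 = ‖x‖^2 := by rw [← hTx_eq]; exact hTx2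
    have hFx2 : ‖F x‖^2 = ‖x‖^2 :=
      le_antisymm (hFnorm x) (by rw [← hpFx2]; exact hpnorm (F x))
    have hproj_eq : ∀ z : H, ‖p z‖^2 = ‖z‖^2 → p z = z := by
      intro z hz
      have hinz : ⟪z, p z⟫_ℂ = ⟪p z, p z⟫_ℂ := by
        calc ⟪z, p z⟫_ℂ = ⟪z, p (p z)⟫_ℂ := by
              rw [← ContinuousLinearMap.mul_apply, hpp]
        _ = ⟪p z, p z⟫_ℂ := (hsymm p hpsa z (p z)).symm
      have hre : RCLike.re ⟪z, p z⟫_ℂ = ‖p z‖^2 := by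
        rw [hinz, inner_self_eq_norm_sq]
      have hns : ‖z - p z‖^2 = 0 := by
        rw [norm_sub_sq (𝕜 := ℂ), hre, hz]
        ring
      have h0 : z - p z = 0 := by
        have := pow_eq_zero_iff (n := 2) (by norm_num) |>.mp hns
        exact norm_eq_zero.mp this
      rw [sub_eq_zero] at h0
      exact h0.symm
    have hpFx : p (F x) = F x := hproj_eq (F x) (by rw [hpFx2, hFx2])
    have hTxFx : T x = F x := by rw [hTx_eq, hpFx]
    -- F (F x) = x
    have hFFx : F (F x) = x := by
      have hre : RCLike.re ⟪F (F x), x⟫_ℂ = ‖x‖^2 := by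
        rw [hsymm F hFsa (F x) x, inner_self_eq_norm_sq, hFx2]
      have hFFle : ‖F (F x)‖^2 ≤ ‖x‖^2 := le_of_le_of_eq (hFnorm (F x)) hFx2
      have hns : ‖F (F x) - x‖^2 ≤ 0 := by
        rw [norm_sub_sq (𝕜 := ℂ), hre]
        linarith
      have hns0 : ‖F (F x) - x‖^2 = 0 := le_antisymm hns (by positivity)
      have h0 : F (F x) - x = 0 := by
        have := pow_eq_zero_iff (n := 2) (by norm_num) |>.mp hns0
        exact norm_eq_zero.mp this
      rw [sub_eq_zero] at h0
      exact h0
    have hTTx : T (T x) = x := by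
      rw [hTxFx, hTapp, hpFx, hFFx, hpx]
    -- decompose x into eigenvectors
    set u : H := (2⁻¹ : ℂ) • (x + T x) with hu_def
    set v : H := (2⁻¹ : ℂ) • (x - T x) with hv_def
    have hTu : T u = u := by
      rw [hu_def, map_smul, map_add, hTTx, add_comm]
    have hTv : T v = -v := by
      rw [hv_def, map_smul, map_sub, hTTx, ← smul_neg]
      congr 1
      abel
    have huv : u + v = x := by
      rw [hu_def, hv_def, ← smul_add]
      have h1 : (x + T x) + (x - T x) = (2 : ℂ) • x := by
        rw [two_smul]; abel
      rw [h1, smul_smul]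
      norm_num
    have humem : u ∈ U₁ := by
      rw [hU₁, LinearMap.mem_ker]
      have : (T - 1) u = T u - u := by
        simp [ContinuousLinearMap.sub_apply, ContinuousLinearMap.one_apply]
      rw [ContinuousLinearMap.coe_coe, this, hTu, sub_self]
    have hvmem : v ∈ U₂ := by
      rw [hU₂, LinearMap.mem_ker]
      have : (T + 1) v = T v + v := by
        simp [ContinuousLinearMap.add_apply, ContinuousLinearMap.one_apply]
      rw [ContinuousLinearMap.coe_coe, this, hTv, neg_add_cancel]
    have hvperp : v ∈ U₁ᗮ := by
      rw [Submodule.mem_orthogonal]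
      intro w hw
      have hTw : T w = w := by
        rw [hU₁, LinearMap.mem_ker] at hw
        have h2 : T w - w = 0 := by
          simpa [ContinuousLinearMap.sub_apply, ContinuousLinearMap.one_apply] using hw
        rw [sub_eq_zero] at h2
        exact h2
      have h1 : ⟪w, v⟫_ℂ = -⟪w, v⟫_ℂ := by
        conv_lhs => rw [← hTw]
        rw [hsymm T hTsa w v, hTv, inner_neg_right]
      have h2 : (2 : ℂ) * ⟪w, v⟫_ℂ = 0 := by linear_combination h1
      rcases mul_eq_zero.mp h2 with h | h
      · exact absurd h two_ne_zero
      · exact h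
    have huperp : u ∈ U₂ᗮ := by
      rw [Submodule.mem_orthogonal]
      intro w hw
      have hTw : T w = -w := by
        rw [hU₂, LinearMap.mem_ker] at hw
        have h2 : T w + w = 0 := by
          simpa [ContinuousLinearMap.add_apply, ContinuousLinearMap.one_apply] using hw
        exact eq_neg_of_add_eq_zero_left h2
      have h1 : -⟪w, u⟫_ℂ = ⟪w, u⟫_ℂ := by
        calc -⟪w, u⟫_ℂ = ⟪-w, u⟫_ℂ := (inner_neg_left w u).symm
        _ = ⟪T w, u⟫_ℂ := by rw [hTw]
        _ = ⟪w, T u⟫_ℂ := hsymm T hTsa w u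
        _ = ⟪w, u⟫_ℂ := by rw [hTu]
      have h2 : (2 : ℂ) * ⟪w, u⟫_ℂ = 0 := by linear_combination -h1
      rcases mul_eq_zero.mp h2 with h | h
      · exact absurd h two_ne_zero
      · exact h
    have hP₁u : P₁ u = u := by
      rw [hP₁, ContinuousLinearMap.comp_apply]
      have h1 : Submodule.orthogonalProjectionOnto U₁ u = ⟨u, humem⟩ :=
        Submodule.orthogonalProjectionOnto_mem_subspace_eq_self (⟨u, humem⟩ : U₁)
      rw [h1]
      rfl
    have hP₁v : P₁ v = 0 := by
      rw [hP₁, ContinuousLinearMap.comp_apply,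
        Submodule.orthogonalProjectionOnto_apply_of_mem_orthogonal hvperp]
      rfl
    have hP₂v : P₂ v = v := by
      rw [hP₂, ContinuousLinearMap.comp_apply]
      have h1 : Submodule.orthogonalProjectionOnto U₂ v = ⟨v, hvmem⟩ :=
        Submodule.orthogonalProjectionOnto_mem_subspace_eq_self (⟨v, hvmem⟩ : U₂)
      rw [h1]
      rfl
    have hP₂u : P₂ u = 0 := by
      rw [hP₂, ContinuousLinearMap.comp_apply,
        Submodule.orthogonalProjectionOnto_apply_of_mem_orthogonal huperp]
      rfl
    have hu0 : u = 0 := by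
      have h1 : P₁ x = u := by
        rw [← huv, map_add, hP₁u, hP₁v, add_zero]
      rw [← h1, hP₁x]
    have hv0 : v = 0 := by
      have h1 : P₂ x = v := by
        rw [← huv, map_add, hP₂u, hP₂v, zero_add]
      rw [← h1, hP₂x]
    rw [← huv, hu0, hv0, add_zero]
  -- dense range
  have hhsa : IsSelfAdjoint hop := hpos.isSelfAdjoint
  have hdense : DenseRange ⇑hop := by
    have horth : (LinearMap.range (hop : H →ₗ[ℂ] H))ᗮ = ⊥ := by
      rw [Submodule.eq_bot_iff]
      intro x hx
      rw [Submodule.mem_orthogonal] at hx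
      have hx0 : hop x = 0 := by
        have h1 : ⟪hop (hop x), x⟫_ℂ = 0 := hx _ (LinearMap.mem_range_self _ (hop x))
        have h2 : ⟪hop x, hop x⟫_ℂ = 0 :=
          (hsymm hop hhsa (hop x) x).symm.trans h1
        exact inner_self_eq_zero.mp h2
      exact hinj x hx0
    have htop : (LinearMap.range (hop : H →ₗ[ℂ] H)).topologicalClosure = ⊤ :=
      Submodule.topologicalClosure_eq_top_iff.mpr horth
    have hcl : closure (Set.range ⇑hop) = Set.univ := by
      have h2 : (Set.range ⇑hop) = ((LinearMap.range (hop : H →ₗ[ℂ] H) : Submodule ℂ H) : Set H) :=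
        (LinearMap.coe_range _).symm
      rw [h2, ← Submodule.topologicalClosure_coe, htop]
      rfl
    rw [DenseRange, dense_iff_closure_eq]
    exact hcl
  -- commutation
  have hcommT : T * hop = hop * T := by
    have c1 : T * (1 - p) = 0 := by rw [mul_sub, mul_one, hTp, sub_self]
    have c2 : (1 - p) * T = 0 := by rw [sub_mul, one_mul, hpT, sub_self]
    have c3 : T * (p - T * T) = (p - T * T) * T := by
      have e1 : T * (T * T) = T * T * T := (mul_assoc T T T).symm
      rw [mul_sub, sub_mul, hTp, hpT, e1]
    have c4 : T * S₁ = S₁ * T := by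
      rw [hS₁]
      calc T * (P₁ * C * P₁) = ((T * P₁) * C) * P₁ := by
            rw [← mul_assoc, ← mul_assoc]
      _ = (P₁ * C) * P₁ := by rw [hTP₁]
      _ = (P₁ * C) * (P₁ * T) := by rw [hP₁T]
      _ = (P₁ * C * P₁) * T := by rw [← mul_assoc]
    have c5 : T * S₂ = S₂ * T := by
      rw [hS₂]
      calc T * (P₂ * C * P₂) = ((T * P₂) * C) * P₂ := by
            rw [← mul_assoc, ← mul_assoc]
      _ = ((-P₂) * C) * P₂ := by rw [hTP₂]
      _ = (P₂ * C) * (-P₂) := by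
            rw [neg_mul, neg_mul, mul_neg]
      _ = (P₂ * C) * (P₂ * T) := by rw [hP₂T]
      _ = (P₂ * C * P₂) * T := by rw [← mul_assoc]
    rw [hhop, mul_add, mul_add, mul_add, add_mul, add_mul, add_mul,
      c1, c2, c3, c4, c5]
  exact ⟨hop, hpos, hJ, hdense, hcommT⟩
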